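/- arXiv:2410.15921 — 4 statements merged into one kernel-verified Lean document; each statement's English description precedes it below -/
import Mathlib

section
/- Under the hypotheses of the previous divergence and Rayleigh bounds, if (λ_min(P)/D²)·||∇σ(p_c)|| − M·D > 0, then ∇σ(p_c)ᵀ L_σ > 0, i.e., L_σ = (1/(ND²)) Σ_i σ(p_c + x_i) x_i is an ascending direction at p_c. -/
open RealInnerProductSpace Matrix

lemma taylor_bound_aux {m : ℕ} (σ : EuclideanSpace ℝ (Fin m) → ℝ) (M : ℝ)
    (hσ : ContDiff ℝ 2 σ)
    (hHess : ∀ a : EuclideanSpace ℝ (Fin m), ‖iteratedFDeriv ℝ 2 σ a‖ ≤ 2 * M)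
    (pc v : EuclideanSpace ℝ (Fin m)) :
    |σ (pc + v) - σ pc - fderiv ℝ σ pc v| ≤ M * ‖v‖ ^ 2 := by
  have hdσ : Differentiable ℝ σ := hσ.differentiable (by norm_num)
  have hdf : Differentiable ℝ (fderiv ℝ σ) :=
    (hσ.fderiv_right (m := 1) (by norm_num)).differentiable one_ne_zero
  have hbound : ∀ a, ‖fderiv ℝ (fderiv ℝ σ) a‖ ≤ 2 * M := by
    intro a
    have h1 : ‖fderiv ℝ (fderiv ℝ σ) a‖ ≤ ‖iteratedFDeriv ℝ 1 (fderiv ℝ σ) a‖ := by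
      refine ContinuousLinearMap.opNorm_le_bound _ (norm_nonneg _) fun u => ?_
      calc ‖(fderiv ℝ (fderiv ℝ σ) a) u‖
          = ‖iteratedFDeriv ℝ 1 (fderiv ℝ σ) a (fun _ => u)‖ := by
            rw [iteratedFDeriv_one_apply]
        _ ≤ ‖iteratedFDeriv ℝ 1 (fderiv ℝ σ) a‖ * ∏ _i : Fin 1, ‖u‖ :=
            (iteratedFDeriv ℝ 1 (fderiv ℝ σ) a).le_opNorm _
        _ = ‖iteratedFDeriv ℝ 1 (fderiv ℝ σ) a‖ * ‖u‖ := by simp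
    rw [norm_iteratedFDeriv_fderiv] at h1
    exact h1.trans (hHess a)
  have hlip : ∀ a b : EuclideanSpace ℝ (Fin m),
      ‖fderiv ℝ σ a - fderiv ℝ σ b‖ ≤ 2 * M * ‖a - b‖ :=
    fun a b => convex_univ.norm_image_sub_le_of_norm_fderiv_le
      (fun z _ => hdf z) (fun z _ => hbound z) (Set.mem_univ b) (Set.mem_univ a)
  set L := fderiv ℝ σ pc v with hL
  have key : ∀ ε : ℝ, |ε| = 1 → ε * (σ (pc + v) - σ pc - L) ≤ M * ‖v‖ ^ 2 := by
    intro ε hε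
    set ψ : ℝ → ℝ := fun t => ε * (σ (pc + t • v) - t * L) - M * t ^ 2 * ‖v‖ ^ 2 with hψdef
    have hφ : ∀ t : ℝ, HasDerivAt (fun t : ℝ => σ (pc + t • v))
        (fderiv ℝ σ (pc + t • v) v) t := by
      intro t
      have h1 : HasDerivAt (fun t : ℝ => pc + t • v) v t := by
        simpa using ((hasDerivAt_id t).smul_const v).const_add pc
      exact (hdσ (pc + t • v)).hasFDerivAt.comp_hasDerivAt t h1
    have hψ : ∀ t : ℝ, HasDerivAt ψ
        (ε * (fderiv ℝ σ (pc + t • v) v - L) - M * (2 * t) * ‖v‖ ^ 2) t := by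
      intro t
      have h2 : HasDerivAt (fun t : ℝ => t * L) L t := by
        simpa using (hasDerivAt_id t).mul_const L
      have h3 : HasDerivAt (fun t : ℝ => M * t ^ 2 * ‖v‖ ^ 2) (M * (2 * t) * ‖v‖ ^ 2) t := by
        have := ((hasDerivAt_pow 2 t).const_mul M).mul_const (‖v‖ ^ 2)
        simpa [pow_one, mul_comm, mul_assoc, mul_left_comm] using this
      exact (((hφ t).sub h2).const_mul ε).sub h3
    have hder : ∀ t ∈ interior (Set.Icc (0:ℝ) 1), deriv ψ t ≤ 0 := by
      intro t ht
      rw [interior_Icc] at ht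
      rw [(hψ t).deriv]
      have h5 : ‖fderiv ℝ σ (pc + t • v) - fderiv ℝ σ pc‖ ≤ 2 * M * (t * ‖v‖) := by
        have := hlip (pc + t • v) pc
        simpa [norm_smul, abs_of_pos ht.1] using this
      have hA : |fderiv ℝ σ (pc + t • v) v - L| ≤ 2 * M * t * ‖v‖ ^ 2 := by
        calc |fderiv ℝ σ (pc + t • v) v - L|
            = ‖(fderiv ℝ σ (pc + t • v) - fderiv ℝ σ pc) v‖ := by
              rw [hL]; simp [ContinuousLinearMap.sub_apply]
          _ ≤ ‖fderiv ℝ σ (pc + t • v) - fderiv ℝ σ pc‖ * ‖v‖ :=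
              ContinuousLinearMap.le_opNorm _ _
          _ ≤ 2 * M * (t * ‖v‖) * ‖v‖ := mul_le_mul_of_nonneg_right h5 (norm_nonneg v)
          _ = 2 * M * t * ‖v‖ ^ 2 := by ring
      have h6 : ε * (fderiv ℝ σ (pc + t • v) v - L) ≤ |fderiv ℝ σ (pc + t • v) v - L| := by
        calc ε * (fderiv ℝ σ (pc + t • v) v - L) ≤ |ε * (fderiv ℝ σ (pc + t • v) v - L)| :=
              le_abs_self _
          _ = |fderiv ℝ σ (pc + t • v) v - L| := by rw [abs_mul, hε, one_mul]
      have he : M * (2 * t) * ‖v‖ ^ 2 = 2 * M * t * ‖v‖ ^ 2 := by ring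
      linarith
    have hanti : AntitoneOn ψ (Set.Icc 0 1) :=
      antitoneOn_of_deriv_nonpos (convex_Icc 0 1)
        (fun t _ => (hψ t).differentiableAt.continuousAt.continuousWithinAt)
        (fun t _ => (hψ t).differentiableAt.differentiableWithinAt)
        hder
    have h01 : ψ 1 ≤ ψ 0 :=
      hanti (Set.left_mem_Icc.mpr zero_le_one) (Set.right_mem_Icc.mpr zero_le_one) zero_le_one
    have e0 : ψ 0 = ε * σ pc := by simp [hψdef]
    have e1 : ψ 1 = ε * (σ (pc + v) - L) - M * ‖v‖ ^ 2 := by simp [hψdef]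
    rw [e0, e1] at h01
    nlinarith [h01]
  have h1 := key 1 (by norm_num)
  have h2 := key (-1) (by norm_num)
  rw [abs_le]
  constructor <;> nlinarith [h1, h2]

lemma rayleigh_min_aux {m : ℕ} [Nonempty (Fin m)] (P : Matrix (Fin m) (Fin m) ℝ)
    (hPh : P.IsHermitian) (v : EuclideanSpace ℝ (Fin m)) :
    (⨅ i, hPh.eigenvalues i) * ‖v‖ ^ 2 ≤ ∑ j, v j * (P *ᵥ fun k => v k) j := by
  classical
  set b := hPh.eigenvectorBasis with hb
  set μ := hPh.eigenvalues with hμ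
  set T := Matrix.toEuclideanLin P with hT
  set c : Fin m → ℝ := fun j => ⟪b j, v⟫ with hc
  have hv : ∑ j, c j • b j = v := b.sum_repr' v
  have hTb : ∀ j, T (b j) = μ j • b j := by
    intro j
    rw [hT, Matrix.toEuclideanLin_apply, hPh.mulVec_eigenvectorBasis j]
    simp
    rfl
  have hTv : T v = ∑ j, (μ j * c j) • b j := by
    conv_lhs => rw [← hv]
    rw [map_sum]
    refine Finset.sum_congr rfl fun j _ => ?_
    rw [LinearMap.map_smul, hTb j, smul_smul, mul_comm]
  have hinner : ⟪v, T v⟫ = ∑ j, μ j * c j ^ 2 := by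
    rw [hTv, inner_sum]
    refine Finset.sum_congr rfl fun j _ => ?_
    rw [real_inner_smul_right, real_inner_comm (b j) v,
      show (inner ℝ (b j) v : ℝ) = c j from rfl]
    ring
  have hnorm : ‖v‖ ^ 2 = ∑ j, c j ^ 2 := by
    rw [← real_inner_self_eq_norm_sq]
    nth_rewrite 2 [← hv]
    rw [inner_sum]
    refine Finset.sum_congr rfl fun j _ => ?_
    rw [real_inner_smul_right, real_inner_comm (b j) v,
      show (inner ℝ (b j) v : ℝ) = c j from rfl]
    ring
  have hmono : (⨅ i, μ i) * ‖v‖ ^ 2 ≤ ∑ j, μ j * c j ^ 2 := by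
    rw [hnorm, Finset.mul_sum]
    refine Finset.sum_le_sum fun j _ => ?_
    exact mul_le_mul_of_nonneg_right (ciInf_le (Finite.bddBelow_range _) j) (sq_nonneg _)
  have hfin : ⟪v, T v⟫ = ∑ j, v j * (P *ᵥ fun k => v k) j := by
    simp only [PiLp.inner_apply, RCLike.inner_apply, conj_trivial, hT,
      Matrix.toEuclideanLin_apply]
    exact Finset.sum_congr rfl fun _ _ => mul_comm _ _
  rw [← hfin, hinner]
  exact hmono

/-- Proposition 1: if `(λ_min(P)/D²)·‖∇σ(p_c)‖ − M·D > 0` then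
`∇σ(p_c)ᵀ L_σ > 0`, i.e. `L_σ` is an ascending direction at `p_c`. -/
theorem Lsigma_ascending_of_hS_pos
    (m N : ℕ) (hm : 0 < m) (σ : EuclideanSpace ℝ (Fin m) → ℝ) (M : ℝ)
    (hσ : ContDiff ℝ 2 σ)
    (hHess : ∀ a : EuclideanSpace ℝ (Fin m), ‖iteratedFDeriv ℝ 2 σ a‖ ≤ 2 * M)
    (pc : EuclideanSpace ℝ (Fin m))
    (x : Fin N → EuclideanSpace ℝ (Fin m))
    (hsum : ∑ i, x i = 0)
    (hspan : Submodule.span ℝ (Set.range x) = ⊤)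
    (D : ℝ) (hD : IsGreatest (Set.range fun i => ‖x i‖) D) (hDpos : 0 < D)
    (P : Matrix (Fin m) (Fin m) ℝ)
    (hP : P = ((N : ℝ)⁻¹) • ∑ i, Matrix.vecMulVec (fun j => x i j) (fun j => x i j))
    (hPh : P.IsHermitian)
    (Lσ : EuclideanSpace ℝ (Fin m))
    (hLσ : Lσ = (1 / (N * D ^ 2)) • ∑ i, σ (pc + x i) • x i)
    (hcond :
      haveI : Nonempty (Fin m) := Fin.pos_iff_nonempty.mp hm
      0 < (⨅ i, hPh.eigenvalues i) / D ^ 2 * ‖gradient σ pc‖ - M * D) :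
    0 < ⟪gradient σ pc, Lσ⟫ := by
  haveI hne : Nonempty (Fin m) := Fin.pos_iff_nonempty.mp hm
  classical
  obtain ⟨i0, -⟩ := hD.1
  have hN : 0 < N := Fin.pos_iff_nonempty.mpr ⟨i0⟩
  have hNR : (0:ℝ) < N := by exact_mod_cast hN
  have hDmax : ∀ i, ‖x i‖ ≤ D := fun i => hD.2 ⟨i, rfl⟩
  have hM : 0 ≤ M := by
    have h := (norm_nonneg (iteratedFDeriv ℝ 2 σ pc)).trans (hHess pc); linarith
  set g : EuclideanSpace ℝ (Fin m) := gradient σ pc with hg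
  have hgrad : ∀ v : EuclideanSpace ℝ (Fin m), ⟪g, v⟫ = fderiv ℝ σ pc v := fun v =>
    InnerProductSpace.toDual_symm_apply
  have htay : ∀ i, |σ (pc + x i) - σ pc - ⟪g, x i⟫| ≤ M * ‖x i‖ ^ 2 := by
    intro i; rw [hgrad]; exact taylor_bound_aux σ M hσ hHess pc (x i)
  set lam : ℝ := ⨅ i, hPh.eigenvalues i with hlam
  have hcond' : 0 < lam / D ^ 2 * ‖g‖ - M * D := hcond
  have hgpos : 0 < ‖g‖ := by
    rcases (norm_nonneg g).eq_or_lt.imp Eq.symm id with h | h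
    · exfalso; rw [h] at hcond'
      have hMD : 0 ≤ M * D := mul_nonneg hM hDpos.le
      nlinarith [hcond']
    · exact h
  have hinner : ⟪g, Lσ⟫ = (1 / (N * D ^ 2)) * ∑ i, σ (pc + x i) * ⟪g, x i⟫ := by
    rw [hLσ, real_inner_smul_right, inner_sum]
    congr 1
    exact Finset.sum_congr rfl fun i _ => real_inner_smul_right _ _ _
  have hsum0 : ∑ i, ⟪g, x i⟫ = 0 := by
    rw [← inner_sum, hsum, inner_zero_right]
  have hiq : ∀ i, ⟪g, x i⟫ = ∑ j, g j * x i j := by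
    intro i
    simp [PiLp.inner_apply, RCLike.inner_apply]
    exact Finset.sum_congr rfl fun _ _ => mul_comm _ _
  have hray := rayleigh_min_aux P hPh g
  have hPsum : ∑ j, g j * (P *ᵥ fun k => g k) j = (N:ℝ)⁻¹ * ∑ i, (∑ j, g j * x i j) ^ 2 := by
    rw [hP]
    simp only [Matrix.mulVec, dotProduct, Matrix.smul_apply, Matrix.sum_apply,
      Matrix.vecMulVec_apply, smul_eq_mul, Finset.mul_sum, Finset.sum_mul, sq]
    refine Eq.trans (Finset.sum_congr rfl fun j _ => Finset.sum_comm) ?_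
    rw [Finset.sum_comm]
    refine Finset.sum_congr rfl fun i _ => Finset.sum_congr rfl fun j _ =>
      Finset.sum_congr rfl fun k _ => ?_
    ring
  have h1 : (N:ℝ) * (lam * ‖g‖ ^ 2) ≤ ∑ i, ⟪g, x i⟫ ^ 2 := by
    have h : lam * ‖g‖ ^ 2 ≤ (N:ℝ)⁻¹ * ∑ i, ⟪g, x i⟫ ^ 2 := by
      have h0 := hray
      rw [hPsum] at h0
      have he2 : ∑ i, (∑ j, g j * x i j) ^ 2 = ∑ i, ⟪g, x i⟫ ^ 2 :=
        Finset.sum_congr rfl fun i _ => by rw [hiq i]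
      rw [he2] at h0
      exact h0
    calc (N:ℝ) * (lam * ‖g‖ ^ 2) ≤ (N:ℝ) * ((N:ℝ)⁻¹ * ∑ i, ⟪g, x i⟫ ^ 2) :=
          mul_le_mul_of_nonneg_left h hNR.le
      _ = ∑ i, ⟪g, x i⟫ ^ 2 := by
          rw [← mul_assoc, mul_inv_cancel₀ hNR.ne', one_mul]
  have h2 : ∀ i, -(M * D ^ 3 * ‖g‖) ≤ (σ (pc + x i) - σ pc - ⟪g, x i⟫) * ⟪g, x i⟫ := by
    intro i
    have hgx : |⟪g, x i⟫| ≤ ‖g‖ * D := by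
      refine (abs_real_inner_le_norm g (x i)).trans ?_
      exact mul_le_mul_of_nonneg_left (hDmax i) (norm_nonneg g)
    have hx2 : ‖x i‖ ^ 2 ≤ D ^ 2 := by nlinarith [hDmax i, norm_nonneg (x i)]
    have hr : |σ (pc + x i) - σ pc - ⟪g, x i⟫| ≤ M * D ^ 2 := by
      refine (htay i).trans ?_
      exact mul_le_mul_of_nonneg_left hx2 hM
    have hb1 : |(σ (pc + x i) - σ pc - ⟪g, x i⟫) * ⟪g, x i⟫| ≤ M * D ^ 3 * ‖g‖ := by
      rw [abs_mul]
      calc |σ (pc + x i) - σ pc - ⟪g, x i⟫| * |⟪g, x i⟫| ≤ (M * D ^ 2) * (‖g‖ * D) :=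
            mul_le_mul hr hgx (abs_nonneg _) (by positivity)
        _ = M * D ^ 3 * ‖g‖ := by ring
    linarith [neg_abs_le ((σ (pc + x i) - σ pc - ⟪g, x i⟫) * ⟪g, x i⟫), hb1]
  have h3 : (N:ℝ) * -(M * D ^ 3 * ‖g‖) ≤ ∑ i, (σ (pc + x i) - σ pc - ⟪g, x i⟫) * ⟪g, x i⟫ := by
    calc (N:ℝ) * -(M * D ^ 3 * ‖g‖) = ∑ _i : Fin N, -(M * D ^ 3 * ‖g‖) := by
          simp [Finset.sum_const, Finset.card_univ, mul_comm]
      _ ≤ _ := Finset.sum_le_sum fun i _ => h2 i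
  have e : ∑ i, σ (pc + x i) * ⟪g, x i⟫
      = σ pc * (∑ i, ⟪g, x i⟫) + ∑ i, ⟪g, x i⟫ ^ 2
        + ∑ i, (σ (pc + x i) - σ pc - ⟪g, x i⟫) * ⟪g, x i⟫ := by
    rw [Finset.mul_sum, ← Finset.sum_add_distrib, ← Finset.sum_add_distrib]
    exact Finset.sum_congr rfl fun i _ => by ring
  have hS : (N:ℝ) * (lam * ‖g‖ ^ 2) - N * (M * D ^ 3 * ‖g‖)
      ≤ ∑ i, σ (pc + x i) * ⟪g, x i⟫ := by
    rw [e, hsum0, mul_zero, zero_add]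
    linarith
  have hpos : (0:ℝ) < 1 / (N * D ^ 2) := by positivity
  have h4 : (1 / ((N:ℝ) * D ^ 2)) * ((N:ℝ) * (lam * ‖g‖ ^ 2) - N * (M * D ^ 3 * ‖g‖))
      ≤ ⟪g, Lσ⟫ := by
    rw [hinner]
    exact mul_le_mul_of_nonneg_left hS hpos.le
  have heq : (1 / ((N:ℝ) * D ^ 2)) * ((N:ℝ) * (lam * ‖g‖ ^ 2) - N * (M * D ^ 3 * ‖g‖))
      = ‖g‖ * (lam / D ^ 2 * ‖g‖ - M * D) := by
    field_simp
  have hfin : 0 < ‖g‖ * (lam / D ^ 2 * ‖g‖ - M * D) := mul_pos hgpos hcond'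
  rw [heq] at h4
  linarith
end

section
/- Consider the linear ODE on R^{mN}: d/dt x̂(t) = −L̄ x̂(t) + L̄ x, where L̄ = L ⊗ I_m and L is the Laplacian of a connected undirected graph on N nodes, and x ∈ R^{mN} has zero average (Σ_i x_i = 0). If Σ_i x̂_i(0) = 0, then x̂(t) → x exponentially fast as t → ∞. -/
open Matrix

private lemma quad_continuous (N : ℕ) (L : Matrix (Fin N) (Fin N) ℝ) :
    Continuous (fun v : Fin N → ℝ => ∑ i, v i * L.mulVec v i) := by
  apply continuous_finset_sum
  intro i _
  apply (continuous_apply i).mul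
  simp only [Matrix.mulVec, dotProduct]
  exact continuous_finset_sum _ fun k _ => continuous_const.mul (continuous_apply k)

private lemma sum_sq_pos_of_ne_zero {N : ℕ} {v : Fin N → ℝ} (hv : v ≠ 0) :
    0 < ∑ i, (v i) ^ 2 := by
  rcases Function.ne_iff.mp hv with ⟨i, hi⟩
  have : (0:ℝ) < v i ^ 2 := pow_two_pos_of_ne_zero hi
  refine Finset.sum_pos' (fun k _ => by positivity) ⟨i, Finset.mem_univ i, this⟩

/-- Spectral gap of a PSD matrix whose kernel consists of constant vectors, on the
zero-sum subspace. -/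
private lemma spectral_gap (N : ℕ) (L : Matrix (Fin N) (Fin N) ℝ)
    (hpsd : L.PosSemidef)
    (hker : ∀ v : Fin N → ℝ, L.mulVec v = 0 → ∃ c : ℝ, v = fun _ => c) :
    ∃ lam > 0, ∀ v : Fin N → ℝ, ∑ i, v i = 0 →
      lam * ∑ i, (v i) ^ 2 ≤ ∑ i, v i * L.mulVec v i := by
  by_cases htriv : ∀ v : Fin N → ℝ, (∑ i, v i = 0) → v = 0
  · refine ⟨1, one_pos, fun v hv => ?_⟩
    rw [htriv v hv]
    simp
  · push_neg at htriv
    obtain ⟨v₀, hv₀sum, hv₀ne⟩ := htriv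
    have hN : 0 < N := by
      rcases Nat.eq_zero_or_pos N with h | h
      · exfalso; apply hv₀ne; subst h; funext i; exact absurd i.2 (by omega)
      · exact h
    -- the set S of zero-sum unit vectors
    set S : Set (Fin N → ℝ) := {v | (∑ i, v i = 0) ∧ ∑ i, (v i) ^ 2 = 1} with hS
    have hQ := quad_continuous N L
    -- S is nonempty
    have hSne : S.Nonempty := by
      set r : ℝ := Real.sqrt (∑ i, (v₀ i) ^ 2) with hr
      have hrpos : 0 < r := Real.sqrt_pos.mpr (sum_sq_pos_of_ne_zero hv₀ne)
      refine ⟨fun i => v₀ i / r, ?_, ?_⟩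
      · rw [← Finset.sum_div, hv₀sum, zero_div]
      · have : ∑ i, (v₀ i / r) ^ 2 = (∑ i, (v₀ i) ^ 2) / r ^ 2 := by
          rw [Finset.sum_div]; congr 1; funext i; ring
        rw [this, hr, Real.sq_sqrt (le_of_lt (sum_sq_pos_of_ne_zero hv₀ne))]
        exact div_self (ne_of_gt (sum_sq_pos_of_ne_zero hv₀ne))
    -- S is compact
    have hScl : IsClosed S := by
      apply IsClosed.inter
      · exact isClosed_eq (continuous_finset_sum _ fun i _ => continuous_apply i)
          continuous_const
      · exact isClosed_eq (continuous_finset_sum _ fun i _ =>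
          (continuous_apply i).pow 2) continuous_const
    have hSbd : Bornology.IsBounded S := by
      apply Bornology.IsBounded.subset (Metric.isBounded_closedBall (x := (0 : Fin N → ℝ)) (r := 1))
      intro v hv
      rw [Metric.mem_closedBall, dist_zero_right]
      rw [pi_norm_le_iff_of_nonneg zero_le_one]
      intro i
      rw [Real.norm_eq_abs, ← Real.sqrt_one]
      apply Real.abs_le_sqrt
      rw [← hv.2]
      exact Finset.single_le_sum (f := fun k => (v k) ^ 2) (fun k _ => by positivity)
        (Finset.mem_univ i)
    have hScomp : IsCompact S := Metric.isCompact_of_isClosed_isBounded hScl hSbd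
    obtain ⟨u, huS, humin⟩ := hScomp.exists_isMinOn hSne hQ.continuousOn
    set lam : ℝ := ∑ i, u i * L.mulVec u i with hlam
    have hlam_nonneg : 0 ≤ lam := by
      have := hpsd.dotProduct_mulVec_nonneg u
      simpa [dotProduct, star_trivial] using this
    have hlam_pos : 0 < lam := by
      rcases lt_or_eq_of_le hlam_nonneg with h | h
      · exact h
      · exfalso
        have hzero : L.mulVec u = 0 := by
          rw [← (hpsd.dotProduct_mulVec_zero_iff u)]
          simpa [dotProduct, star_trivial] using h.symm
        obtain ⟨c, hc⟩ := hker u hzero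
        have hsum : ∑ i, u i = 0 := huS.1
        rw [hc] at hsum
        simp only [Finset.sum_const, Finset.card_univ, Fintype.card_fin, nsmul_eq_mul] at hsum
        have hc0 : c = 0 := by
          rcases mul_eq_zero.mp hsum with h' | h'
          · exact absurd h' (by exact_mod_cast hN.ne')
          · exact h'
        have : ∑ i, (u i) ^ 2 = 1 := huS.2
        rw [hc, hc0] at this
        simp at this
    refine ⟨lam, hlam_pos, fun v hv => ?_⟩
    by_cases hvz : v = 0
    · subst hvz; simp
    · set r : ℝ := Real.sqrt (∑ i, (v i) ^ 2) with hr
      have hsq : 0 < ∑ i, (v i) ^ 2 := sum_sq_pos_of_ne_zero hvz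
      have hrpos : 0 < r := Real.sqrt_pos.mpr hsq
      have hr2 : r ^ 2 = ∑ i, (v i) ^ 2 := Real.sq_sqrt hsq.le
      set w : Fin N → ℝ := fun i => v i / r with hw
      have hwS : w ∈ S := by
        constructor
        · simp only [hw]; rw [← Finset.sum_div, hv, zero_div]
        · simp only [hw]
          have : ∑ i, (v i / r) ^ 2 = (∑ i, (v i) ^ 2) / r ^ 2 := by
            rw [Finset.sum_div]; congr 1; funext i; ring
          rw [this, hr2, div_self hsq.ne']
      have hmin : lam ≤ ∑ i, w i * L.mulVec w i := humin hwS
      have hmv : L.mulVec w = fun i => (L.mulVec v i) / r := by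
        funext i
        simp only [hw, Matrix.mulVec, dotProduct, Finset.sum_div]
        congr 1; funext k; ring
      have hQw : ∑ i, w i * L.mulVec w i = (∑ i, v i * L.mulVec v i) / r ^ 2 := by
        rw [hmv, Finset.sum_div]
        apply Finset.sum_congr rfl
        intro i _
        show v i / r * (L.mulVec v i / r) = v i * L.mulVec v i / r ^ 2
        rw [div_mul_div_comm, sq]
      rw [hQw] at hmin
      have : lam * r ^ 2 ≤ ∑ i, v i * L.mulVec v i := by
        rw [le_div_iff₀ (by positivity)] at hmin
        linarith [hmin]
      rwa [hr2] at this

/-- Proposition 5 (distributed centroid estimation): for the ODE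
`d/dt x̂ = −L̄ x̂ + L̄ x` with `L` the Laplacian of a connected undirected graph
(symmetric, positive semidefinite, kernel spanned by the all-ones vector), a target `x`
of zero average, and initial estimates of zero average, `x̂(t) → x` exponentially fast. -/
theorem centroid_estimator_exponential_convergence
    (m N : ℕ) (L : Matrix (Fin N) (Fin N) ℝ)
    (hsym : Lᵀ = L) (hpsd : L.PosSemidef)
    (hL1 : L.mulVec (fun _ => 1) = 0)
    (hker : ∀ v : Fin N → ℝ, L.mulVec v = 0 → ∃ c : ℝ, v = fun _ => c)
    (x : Fin N → Fin m → ℝ) (hx : ∑ i, x i = 0)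
    (xhat : ℝ → Fin N → Fin m → ℝ)
    (hODE : ∀ t, HasDerivAt xhat
      (fun i j => L.mulVec (fun k => x k j - xhat t k j) i) t)
    (h0 : ∑ i, xhat 0 i = 0) :
    ∃ C > 0, ∃ lam > 0, ∀ t ≥ 0, ‖xhat t - x‖ ≤ C * Real.exp (-lam * t) := by
  obtain ⟨lam, hlam, hgap⟩ := spectral_gap N L hpsd hker
  -- componentwise derivatives
  have hC : ∀ t (i : Fin N) (j : Fin m), HasDerivAt (fun s => xhat s i j)
      (L.mulVec (fun k => x k j - xhat t k j) i) t := by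
    intro t i j
    have h1 := (hasDerivAt_pi.mp (hODE t)) i
    exact (hasDerivAt_pi.mp h1) j
  -- column sums of L vanish (symmetry + L1 = 0)
  have hcolsum : ∀ k : Fin N, ∑ i, L i k = 0 := by
    intro k
    have h1 : ∑ i, L k i = 0 := by
      have := congrFun hL1 k
      simpa [Matrix.mulVec, dotProduct] using this
    calc ∑ i, L i k = ∑ i, L k i := by
          apply Finset.sum_congr rfl; intro i _
          conv_lhs => rw [← hsym]
          rfl
      _ = 0 := h1
  -- the total sum of (L.mulVec w) vanishes
  have hLsum : ∀ w : Fin N → ℝ, ∑ i, L.mulVec w i = 0 := by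
    intro w
    simp only [Matrix.mulVec, dotProduct]
    rw [Finset.sum_comm]
    rw [Finset.sum_congr rfl (fun k _ => by rw [← Finset.sum_mul, hcolsum k, zero_mul])]
    simp
  -- conservation of the sums ∑ᵢ x̂ᵢⱼ(t)
  have hcons : ∀ t (j : Fin m), ∑ i, xhat t i j = 0 := by
    intro t j
    have hsum : ∀ s : ℝ, HasDerivAt (fun s' => ∑ i, xhat s' i j)
        (∑ i, L.mulVec (fun k => x k j - xhat s k j) i) s := by
      intro s
      exact HasDerivAt.fun_sum (fun i _ => hC s i j)
    have hdiff : Differentiable ℝ (fun s => ∑ i, xhat s i j) := by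
      intro s
      exact (hsum s).differentiableAt
    have hder : ∀ s, deriv (fun s => ∑ i, xhat s i j) s = 0 := by
      intro s
      rw [(hsum s).deriv]
      exact hLsum _
    have := is_const_of_deriv_eq_zero hdiff hder t 0
    rw [this]
    have := congrFun h0 j
    simpa [Finset.sum_apply] using this
  have hxsum : ∀ j : Fin m, ∑ i, x i j = 0 := by
    intro j
    have := congrFun hx j
    simpa [Finset.sum_apply] using this
  -- zero sum of the error columns
  have hesum : ∀ t (j : Fin m), ∑ i, (xhat t i j - x i j) = 0 := by
    intro t j
    rw [Finset.sum_sub_distrib, hcons t j, hxsum j, sub_zero]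
  -- Lyapunov function
  set V : ℝ → ℝ := fun t => ∑ i, ∑ j, (xhat t i j - x i j) ^ 2 with hVdef
  set D : ℝ → ℝ := fun t => ∑ i, ∑ j,
      (2 * (xhat t i j - x i j) * L.mulVec (fun k => x k j - xhat t k j) i) with hDdef
  have hVderiv : ∀ t, HasDerivAt V (D t) t := by
    intro t
    apply HasDerivAt.fun_sum
    intro i _
    apply HasDerivAt.fun_sum
    intro j _
    have h1 : HasDerivAt (fun s => xhat s i j - x i j)
        (L.mulVec (fun k => x k j - xhat t k j) i) t := (hC t i j).sub_const _
    have := h1.fun_pow 2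
    simpa [mul_comm, mul_assoc, mul_left_comm] using this
  have hVnonneg : ∀ t, 0 ≤ V t := by
    intro t
    apply Finset.sum_nonneg; intro i _
    apply Finset.sum_nonneg; intro j _
    positivity
  -- the key differential inequality D t ≤ -2 lam * V t
  have hDle : ∀ t, D t ≤ -2 * lam * V t := by
    intro t
    have hswap : D t = ∑ j, ∑ i,
        2 * (xhat t i j - x i j) * L.mulVec (fun k => x k j - xhat t k j) i :=
      Finset.sum_comm
    have hswapV : V t = ∑ j, ∑ i, (xhat t i j - x i j) ^ 2 := Finset.sum_comm
    rw [hswap, hswapV, Finset.mul_sum]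
    apply Finset.sum_le_sum
    intro j _
    set e : Fin N → ℝ := fun k => xhat t k j - x k j with he
    have hneg : (fun k => x k j - xhat t k j) = -e := by
      funext k; simp [he]
    have hmv : ∀ i, L.mulVec (fun k => x k j - xhat t k j) i = -(L.mulVec e i) := by
      intro i
      rw [hneg, Matrix.mulVec_neg]
      rfl
    have hsum0 : ∑ i, e i = 0 := hesum t j
    have hgap' := hgap e hsum0
    calc ∑ i, 2 * (xhat t i j - x i j) * L.mulVec (fun k => x k j - xhat t k j) i
        = ∑ i, (-2) * (e i * L.mulVec e i) := by
          apply Finset.sum_congr rfl; intro i _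
          rw [hmv i]
          show 2 * (e i) * (-(L.mulVec e i)) = (-2) * (e i * L.mulVec e i)
          ring
      _ = (-2) * ∑ i, e i * L.mulVec e i := by rw [Finset.mul_sum]
      _ ≤ (-2) * (lam * ∑ i, (e i) ^ 2) := by
          apply mul_le_mul_of_nonpos_left hgap' (by norm_num)
      _ = -2 * lam * ∑ i, (xhat t i j - x i j) ^ 2 := by
          have : ∑ i, (e i) ^ 2 = ∑ i, (xhat t i j - x i j) ^ 2 := rfl
          rw [this]; ring
  -- the function g t = V t * exp(2 lam t) is nonincreasing
  set g : ℝ → ℝ := fun t => V t * Real.exp (2 * lam * t) with hgdef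
  have hgderiv : ∀ t, HasDerivAt g
      (D t * Real.exp (2 * lam * t) + V t * (Real.exp (2 * lam * t) * (2 * lam))) t := by
    intro t
    have h0 : HasDerivAt (fun s : ℝ => 2 * lam * s) (2 * lam) t := by
      simpa using (hasDerivAt_id t).const_mul (2 * lam)
    exact (hVderiv t).mul h0.exp
  have hganti : Antitone g := by
    apply antitone_of_deriv_nonpos
    · intro t; exact (hgderiv t).differentiableAt
    · intro t
      rw [(hgderiv t).deriv]
      have h1 : D t * Real.exp (2 * lam * t) + V t * (Real.exp (2 * lam * t) * (2 * lam))
          = (D t + 2 * lam * V t) * Real.exp (2 * lam * t) := by ring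
      rw [h1]
      apply mul_nonpos_of_nonpos_of_nonneg
      · have := hDle t; linarith
      · exact (Real.exp_pos _).le
  -- conclude
  refine ⟨Real.sqrt (V 0) + 1, by positivity, lam, hlam, fun t ht => ?_⟩
  have hgle : g t ≤ g 0 := hganti ht
  have hVle : V t ≤ V 0 * Real.exp (-2 * lam * t) := by
    have h1 : V t * Real.exp (2 * lam * t) ≤ V 0 := by
      have : g 0 = V 0 := by simp [hgdef]
      rw [← this]; exact hgle
    have hexp : Real.exp (-2 * lam * t) = (Real.exp (2 * lam * t))⁻¹ := by
      rw [← Real.exp_neg]; congr 1; ring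
    rw [hexp, ← div_eq_mul_inv, le_div_iff₀ (Real.exp_pos _)]
    exact h1
  have hnormle : ‖xhat t - x‖ ≤ Real.sqrt (V t) := by
    rw [pi_norm_le_iff_of_nonneg (Real.sqrt_nonneg _)]
    intro i
    rw [pi_norm_le_iff_of_nonneg (Real.sqrt_nonneg _)]
    intro j
    rw [Real.norm_eq_abs]
    apply Real.abs_le_sqrt
    have h1 : (xhat t - x) i j = xhat t i j - x i j := rfl
    rw [h1]
    calc (xhat t i j - x i j) ^ 2 ≤ ∑ j', (xhat t i j' - x i j') ^ 2 :=
          Finset.single_le_sum (f := fun j' => (xhat t i j' - x i j')^2)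
            (fun k _ => by positivity) (Finset.mem_univ j)
      _ ≤ V t := Finset.single_le_sum (f := fun i' => ∑ j', (xhat t i' j' - x i' j')^2)
            (fun k _ => Finset.sum_nonneg fun j' _ => by positivity) (Finset.mem_univ i)
  calc ‖xhat t - x‖ ≤ Real.sqrt (V t) := hnormle
    _ ≤ Real.sqrt (V 0 * Real.exp (-2 * lam * t)) := Real.sqrt_le_sqrt hVle
    _ = Real.sqrt (V 0) * Real.exp (-lam * t) := by
        rw [Real.sqrt_mul (hVnonneg 0)]
        congr 1
        have : Real.exp (-2 * lam * t) = Real.exp (-lam * t) ^ 2 := by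
          rw [sq, ← Real.exp_add]; congr 1; ring
        rw [this, Real.sqrt_sq (Real.exp_pos _).le]
    _ ≤ (Real.sqrt (V 0) + 1) * Real.exp (-lam * t) := by
        apply mul_le_mul_of_nonneg_right (by linarith) (Real.exp_pos _).le
end

section
/- Let δ_ij(t) = α_i(t) − α_j(t) satisfy δ̇_ij = −κ δ_ij with κ > 0 and δ_ij(0) ∈ (−2π, 2π). Let p_i, p_j : R≥0 → R² satisfy ṗ_i = (cos α_i, sin α_i), ṗ_j = (cos α_j, sin α_j). Then ||(p_i(t) − p_j(t)) − (p_i(0) − p_j(0))|| ≤ 2π/κ for all t ≥ 0. -/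
lemma unicycle_norm_aux (a b : ℝ) (v : EuclideanSpace ℝ (Fin 2))
    (h0 : v 0 = Real.cos a - Real.cos b) (h1 : v 1 = Real.sin a - Real.sin b) :
    ‖v‖ ≤ |a - b| := by
  rw [EuclideanSpace.norm_eq, ← Real.sqrt_sq_eq_abs]
  apply Real.sqrt_le_sqrt
  have t1 := Real.sin_sq_add_cos_sq a
  have t2 := Real.sin_sq_add_cos_sq b
  have t3 := Real.one_sub_sq_div_two_le_cos (x := a - b)
  have t4 := Real.cos_sub a b
  simp only [Fin.sum_univ_two, Real.norm_eq_abs, sq_abs, h0, h1]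
  nlinarith [t1, t2, t3, t4]

/-- Core estimate of Lemma 6: unit-speed unicycles whose heading difference
`δ_ij = α_i − α_j` satisfies `δ̇_ij = −κ δ_ij` with `κ > 0` and `δ_ij(0) ∈ (−2π, 2π)`
have relative displacement deformation bounded by `2π/κ`. -/
theorem unicycle_pair_displacement_bound
    (κ : ℝ) (hκ : 0 < κ)
    (αi αj : ℝ → ℝ)
    (hδ : ∀ t, HasDerivAt (fun s => αi s - αj s) (-κ * (αi t - αj t)) t)
    (hδ0 : |αi 0 - αj 0| < 2 * Real.pi)
    (pi pj : ℝ → EuclideanSpace ℝ (Fin 2))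
    (hpi : ∀ t, HasDerivAt pi (WithLp.toLp 2 ![Real.cos (αi t), Real.sin (αi t)]) t)
    (hpj : ∀ t, HasDerivAt pj (WithLp.toLp 2 ![Real.cos (αj t), Real.sin (αj t)]) t) :
    ∀ t ≥ 0, ‖(pi t - pj t) - (pi 0 - pj 0)‖ ≤ 2 * Real.pi / κ := by
  intro t ht
  set δ0 : ℝ := αi 0 - αj 0 with hδ0def
  -- solve the ODE: αi s - αj s = δ0 * exp (-κ s)
  have hgderiv : ∀ x : ℝ, HasDerivAt (fun s => (αi s - αj s) * Real.exp (κ * s))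
      ((-κ * (αi x - αj x)) * Real.exp (κ * x) +
        (αi x - αj x) * (Real.exp (κ * x) * (κ * 1))) x := by
    intro x
    exact (hδ x).mul (((hasDerivAt_id x).const_mul κ).exp)
  have hconst : ∀ x : ℝ, (αi x - αj x) * Real.exp (κ * x) = δ0 := by
    intro x
    have := is_const_of_deriv_eq_zero (f := fun s => (αi s - αj s) * Real.exp (κ * s))
      (fun y => (hgderiv y).differentiableAt)
      (fun y => by rw [(hgderiv y).deriv]; ring) x 0
    simpa using this
  have hδt : ∀ s : ℝ, αi s - αj s = δ0 * Real.exp (-κ * s) := by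
    intro s
    have h := hconst s
    have hpos : Real.exp (κ * s) ≠ 0 := (Real.exp_pos _).ne'
    rw [← h, neg_mul, Real.exp_neg]
    field_simp
  -- set up main bound
  set f : ℝ → EuclideanSpace ℝ (Fin 2) := fun s => (pi s - pj s) - (pi 0 - pj 0) with hf
  have hfd : ∀ x : ℝ, HasDerivAt f
      ((WithLp.toLp 2 ![Real.cos (αi x), Real.sin (αi x)] : EuclideanSpace ℝ (Fin 2))
        - WithLp.toLp 2 ![Real.cos (αj x), Real.sin (αj x)]) x := by
    intro x
    exact ((hpi x).sub (hpj x)).sub_const _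
  set B : ℝ → ℝ := fun s => |δ0| / κ * (1 - Real.exp (-κ * s)) with hB
  have hBd : ∀ x : ℝ, HasDerivAt B (|δ0| * Real.exp (-κ * x)) x := by
    intro x
    have h1 : HasDerivAt (fun s : ℝ => Real.exp (-κ * s)) (Real.exp (-κ * x) * (-κ * 1)) x :=
      ((hasDerivAt_id x).const_mul (-κ)).exp
    have h2 := ((h1.const_sub 1).const_mul (|δ0| / κ))
    refine h2.congr_deriv ?_
    field_simp [hκ.ne']
  have key : ∀ ⦃x : ℝ⦄, x ∈ Set.Icc 0 t → ‖f x‖ ≤ B x := by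
    apply image_norm_le_of_norm_deriv_right_le_deriv_boundary
      (fun x _ => (hfd x).continuousAt.continuousWithinAt)
      (fun x _ => (hfd x).hasDerivWithinAt)
      (by simp [hf, hB]) hBd
    intro x _
    have hb := unicycle_norm_aux (αi x) (αj x)
      ((WithLp.toLp 2 ![Real.cos (αi x), Real.sin (αi x)] : EuclideanSpace ℝ (Fin 2))
        - WithLp.toLp 2 ![Real.cos (αj x), Real.sin (αj x)]) rfl rfl
    refine hb.trans ?_
    rw [hδt x, abs_mul, abs_of_pos (Real.exp_pos _)]
  have hmem : t ∈ Set.Icc (0:ℝ) t := ⟨ht, le_refl t⟩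
  refine (key hmem).trans ?_
  have hexp : 0 < Real.exp (-κ * t) := Real.exp_pos _
  have h1 : B t ≤ |δ0| / κ := by
    rw [hB]
    have hnn : 0 ≤ |δ0| / κ := div_nonneg (abs_nonneg _) hκ.le
    nlinarith
  refine h1.trans ?_
  gcongr
end

section
/- Under the heading controller ω_i = −κ δ_i for unicycles ṗ_i = (cos α_i, sin α_i), with all pairwise heading differences decaying as δ_ij(t) = δ_ij(0)e^{−κt} and δ_ij(0) ∈ (−2π,2π), the centroid-relative coordinate x_i(t) = p_i(t) − (1/N)Σ_j p_j(t) satisfies ||x_i(t) − x_i(0)|| ≤ ((N−1)/N)·(2π/κ) for all t ≥ 0 and all i. -/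
private theorem expdecay (κ : ℝ) (d : ℝ → ℝ) (hd : ∀ t, HasDerivAt d (-κ * d t) t) (t : ℝ) :
    d t = d 0 * Real.exp (-κ * t) := by
  have hg : ∀ s, HasDerivAt (fun u => d u * Real.exp (κ * u)) 0 s := by
    intro s
    have he : HasDerivAt (fun u => Real.exp (κ * u)) (Real.exp (κ * s) * κ) s := by
      simpa using ((hasDerivAt_id s).const_mul κ).exp
    have : HasDerivAt (fun u => d u * Real.exp (κ * u)) _ s := (hd s).mul he
    convert this using 1
    ring
  have key : d t * Real.exp (κ * t) = d 0 := by
    have := is_const_of_deriv_eq_zero (f := fun u => d u * Real.exp (κ * u))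
      (fun u => (hg u).differentiableAt) (fun u => (hg u).deriv) t 0
    simpa using this
  rw [← key, mul_assoc, ← Real.exp_add]
  ring_nf
  simp

private theorem cosineq (y : ℝ) : 2 - 2 * Real.cos y ≤ y ^ 2 := by
  have h1 : Real.sin (y/2) ^ 2 ≤ (y/2) ^ 2 := Real.sin_sq_le_sq
  have h2 := Real.sin_sq_eq_half_sub (y/2)
  rw [show 2 * (y/2) = y by ring] at h2
  nlinarith

/-- Pairwise deformation bound. -/
private theorem pairwise_bound (κ : ℝ) (hκ : 0 < κ) (a b : ℝ → ℝ)
    (pa pb : ℝ → EuclideanSpace ℝ (Fin 2))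
    (hpa : ∀ t, HasDerivAt pa (WithLp.toLp 2 ![Real.cos (a t), Real.sin (a t)]) t)
    (hpb : ∀ t, HasDerivAt pb (WithLp.toLp 2 ![Real.cos (b t), Real.sin (b t)]) t)
    (hd : ∀ t, HasDerivAt (fun s => a s - b s) (-κ * (a t - b t)) t)
    (t : ℝ) (ht : 0 ≤ t) :
    ‖(pa t - pb t) - (pa 0 - pb 0)‖ ≤ |a 0 - b 0| / κ := by
  set d0 : ℝ := a 0 - b 0 with hd0
  have hdecay : ∀ s, a s - b s = d0 * Real.exp (-κ * s) :=
    expdecay κ (fun s => a s - b s) hd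
  set f : ℝ → EuclideanSpace ℝ (Fin 2) := fun s => (pa s - pb s) - (pa 0 - pb 0) with hfdef
  set f' : ℝ → EuclideanSpace ℝ (Fin 2) := fun s =>
    (WithLp.toLp 2 ![Real.cos (a s), Real.sin (a s)] - WithLp.toLp 2 ![Real.cos (b s), Real.sin (b s)]) with hf'def
  have hf' : ∀ s, HasDerivAt f (f' s) s := fun s => ((hpa s).sub (hpb s)).sub_const _
  have hnorm : ∀ s, ‖f' s‖ ≤ |a s - b s| := by
    intro s
    rw [EuclideanSpace.norm_eq]
    rw [← Real.sqrt_sq_eq_abs]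
    apply Real.sqrt_le_sqrt
    rw [Fin.sum_univ_two]
    simp only [hf'def, PiLp.sub_apply, PiLp.toLp_apply, Matrix.cons_val_zero, Matrix.cons_val_one, Matrix.head_cons,
      Real.norm_eq_abs, sq_abs]
    have key : (Real.cos (a s) - Real.cos (b s)) ^ 2 + (Real.sin (a s) - Real.sin (b s)) ^ 2
        = 2 - 2 * Real.cos (a s - b s) := by
      rw [Real.cos_sub]
      nlinarith [Real.sin_sq_add_cos_sq (a s), Real.sin_sq_add_cos_sq (b s)]
    rw [key]
    exact cosineq _
  set B : ℝ → ℝ := fun s => |d0| / κ * (1 - Real.exp (-κ * s)) with hBdef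
  set B' : ℝ → ℝ := fun s => |d0| * Real.exp (-κ * s) with hB'def
  have hB : ∀ s, HasDerivAt B (B' s) s := by
    intro s
    have he : HasDerivAt (fun u => Real.exp (-κ * u)) (Real.exp (-κ * s) * (-κ)) s := by
      simpa using ((hasDerivAt_id s).const_mul (-κ)).exp
    have : HasDerivAt B _ s := ((he.const_sub 1).const_mul (|d0| / κ))
    convert this using 1
    simp only [hB'def]
    field_simp
  have hbound : ∀ s ∈ Set.Ico (0:ℝ) t, ‖f' s‖ ≤ B' s := by
    intro s _
    calc ‖f' s‖ ≤ |a s - b s| := hnorm s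
      _ = B' s := by rw [hdecay s, abs_mul, abs_of_pos (Real.exp_pos _)]
  have hmain : ‖f t‖ ≤ B t :=
    image_norm_le_of_norm_deriv_right_le_deriv_boundary
      (f := f) (f' := f') (a := 0) (b := t)
      (fun s _ => (hf' s).continuousAt.continuousWithinAt)
      (fun s _ => (hf' s).hasDerivWithinAt)
      (B := B) (B' := B')
      (by simp [hfdef, hBdef]) hB hbound
      (Set.mem_Icc.2 ⟨ht, le_refl t⟩)
  refine hmain.trans ?_
  have h1 : (0:ℝ) ≤ |d0| / κ := div_nonneg (abs_nonneg _) hκ.le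
  have h2 : 1 - Real.exp (-κ * t) ≤ 1 := by
    have := (Real.exp_pos (-κ * t)).le
    linarith
  calc B t ≤ |d0| / κ * 1 := mul_le_mul_of_nonneg_left h2 h1
    _ = |d0| / κ := mul_one _

/-- Lemma 6 (lem:x): for `N` unit-speed unicycles whose pairwise heading differences
decay as `δ̇_ij = −κ δ_ij` with `δ_ij(0) ∈ (−2π, 2π)`, the centroid-relative coordinate
`xᵢ(t) = pᵢ(t) − (1/N) Σⱼ pⱼ(t)` satisfies
`‖xᵢ(t) − xᵢ(0)‖ ≤ ((N−1)/N)·(2π/κ)` for all `t ≥ 0`. -/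
theorem unicycle_deployment_deformation_bound
    (N : ℕ) (hN : 0 < N) (κ : ℝ) (hκ : 0 < κ)
    (α : Fin N → ℝ → ℝ)
    (p : Fin N → ℝ → EuclideanSpace ℝ (Fin 2))
    (hp : ∀ i t, HasDerivAt (p i) (WithLp.toLp 2 ![Real.cos (α i t), Real.sin (α i t)]) t)
    (hδ : ∀ i j t, HasDerivAt (fun s => α i s - α j s) (-κ * (α i t - α j t)) t)
    (hδ0 : ∀ i j, |α i 0 - α j 0| < 2 * Real.pi)
    (x : Fin N → ℝ → EuclideanSpace ℝ (Fin 2))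
    (hx : ∀ i t, x i t = p i t - (N : ℝ)⁻¹ • ∑ j, p j t) :
    ∀ i, ∀ t ≥ 0,
      ‖x i t - x i 0‖ ≤ ((N : ℝ) - 1) / N * (2 * Real.pi / κ) := by
  intro i t ht
  have hN0 : (N : ℝ) ≠ 0 := Nat.cast_ne_zero.2 hN.ne'
  set g : Fin N → EuclideanSpace ℝ (Fin 2) :=
    fun j => (p i t - p j t) - (p i 0 - p j 0) with hg
  -- each g j bounded
  have hgb : ∀ j, ‖g j‖ ≤ 2 * Real.pi / κ := by
    intro j
    have h1 : ‖g j‖ ≤ |α i 0 - α j 0| / κ :=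
      pairwise_bound κ hκ (α i) (α j) (p i) (p j) (hp i) (hp j) (hδ i j) t ht
    refine h1.trans ?_
    gcongr
    exact (hδ0 i j).le
  -- identity
  have hid : x i t - x i 0 = (N : ℝ)⁻¹ • ∑ j, g j := by
    have hsum : ∑ j, g j = (N : ℝ) • (p i t - p i 0) - ((∑ j, p j t) - ∑ j, p j 0) := by
      simp only [hg, Finset.sum_sub_distrib, Finset.sum_const, Finset.card_univ,
        Fintype.card_fin]
      rw [← Nat.cast_smul_eq_nsmul ℝ, ← Nat.cast_smul_eq_nsmul ℝ]
      module
    rw [hx i t, hx i 0, hsum, smul_sub, smul_smul, inv_mul_cancel₀ hN0, one_smul, smul_sub]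
    abel
  rw [hid]
  have hgi : g i = 0 := by simp [hg]
  have hsumle : ∑ j, ‖g j‖ ≤ ((N : ℝ) - 1) * (2 * Real.pi / κ) := by
    rw [← Finset.sum_erase (f := fun j => ‖g j‖) (a := i) Finset.univ (norm_eq_zero.2 hgi)]
    have := Finset.sum_le_card_nsmul (Finset.univ.erase i) (fun j => ‖g j‖)
      (2 * Real.pi / κ) (fun j _ => hgb j)
    rw [Finset.card_erase_of_mem (Finset.mem_univ i), Finset.card_univ, Fintype.card_fin,
      nsmul_eq_mul] at this
    refine this.trans_eq ?_
    congr 1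
    rw [Nat.cast_sub hN]
    simp
  calc ‖(N : ℝ)⁻¹ • ∑ j, g j‖ = (N : ℝ)⁻¹ * ‖∑ j, g j‖ := by
        rw [norm_smul, Real.norm_eq_abs, abs_of_pos (by positivity)]
    _ ≤ (N : ℝ)⁻¹ * ∑ j, ‖g j‖ := by
        gcongr
        exact norm_sum_le _ _
    _ ≤ (N : ℝ)⁻¹ * (((N : ℝ) - 1) * (2 * Real.pi / κ)) :=
        mul_le_mul_of_nonneg_left hsumle (by positivity)
    _ = ((N : ℝ) - 1) / N * (2 * Real.pi / κ) := by ring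
end
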